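/- Let M be a biharmonic hypersurface in a Riemannian manifold N carrying a torse-forming vector field P, set θ = P♭, and assume N is θ-Einstein: Ric = a⟨,⟩ + b θ⊗θ for functions a,b on N. If on some open subset U ⊆ M both b ≠ 0 and φ|V|² ≠ 0 (where P = φη + V), then the mean curvature f vanishes on U. -/
import Mathlib


/-- **Corollary.** Let `M` be a biharmonic hypersurface in a Riemannian
manifold `N` carrying a torse-forming vector field `P`, set `θ = P♭`, and assume `N` is
`θ`-Einstein: `Ric = a⟨,⟩ + b θ⊗θ`.  If on some open subset `U ⊆ M` both `b ≠ 0` and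
`φ|V|² ≠ 0` (where `P = φη + V`), then the mean curvature `f` vanishes on `U`.
Biharmonicity enters through Theorem 1 of the paper: `f · Ric(η,V) = 0` on `M`. -/
theorem corollary_f_vanishes_on_U
    {M W : Type*} [TopologicalSpace M] [AddCommGroup W] [Module ℝ W]
    (g : M → W →ₗ[ℝ] W →ₗ[ℝ] ℝ)
    (Ric : M → W →ₗ[ℝ] W →ₗ[ℝ] ℝ)
    (η P V : M → W) (φ f a b : M → ℝ)
    (hsym : ∀ p v w, g p v w = g p w v)
    (hη : ∀ p, g p (η p) (η p) = 1)
    (hφ : ∀ p, φ p = g p (P p) (η p))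
    (hPdec : ∀ p, P p = φ p • η p + V p)
    (hVtan : ∀ p, g p (V p) (η p) = 0)
    -- N is θ-Einstein with θ = P♭, i.e. θ(X) = ⟨X,P⟩
    (hEin : ∀ p (v w : W), Ric p v w
        = a p * g p v w + b p * (g p v (P p)) * (g p w (P p)))
    -- M is biharmonic: by Theorem 1 of the paper, f · Ric(η,V) = 0
    (hbih : ∀ p, f p * Ric p (η p) (V p) = 0)
    (U : Set M) (hUopen : IsOpen U)
    (hb : ∀ p ∈ U, b p ≠ 0)
    (hφV : ∀ p ∈ U, φ p * g p (V p) (V p) ≠ 0) :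
    ∀ p ∈ U, f p = 0 := by
  intro p hp
  have hVP : g p (V p) (P p) = g p (V p) (V p) := by
    rw [hPdec p]
    simp [map_add, map_smul, hVtan p]
  have hηP : g p (η p) (P p) = φ p := by
    rw [hφ p, hsym]
  have key : f p * (b p * (φ p * g p (V p) (V p))) = 0 := by
    have := hbih p
    rw [hEin p (η p) (V p), hsym p (η p) (V p), hVtan p, hηP, hVP] at this
    ring_nf at this ⊢
    linarith [this]
  rcases mul_eq_zero.1 key with h | h
  · exact h
  · exact absurd (mul_eq_zero.1 h).resolve_left (by simp [hb p hp, hφV p hp])
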